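/- A parameter vector x = ((a_{i,j}), (ξ_i)) ∈ ℂ^R is a critical point of the Prony map P (i.e., det J_P(x) = 0) if and only if at least one of the following holds: (1) ξ_i = ξ_j for some pair of indices i ≠ j; (2) a_{i,l_i−1} = 0 for some 1 ≤ i ≤ n. -/

import Mathlib

open scoped BigOperators

noncomputable section

/-- Offset of the `i`-th block of columns: the sum of the multiplicities of all previous blocks. -/
def blockOff {n : ℕ} (L : Fin n → ℕ) (i : Fin n) : ℕ := ∑ i' ∈ Finset.Iio i, L i'

theorem blockOff_add_lt {n : ℕ} (L : Fin n → ℕ) (i : Fin n) {j : ℕ} (hj : j < L i) :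
    blockOff L i + j < ∑ i', L i' := by
  have h1 : ∑ i' ∈ insert i (Finset.Iio i), L i' = ∑ i' ∈ Finset.Iio i, L i' + L i := by
    rw [Finset.sum_insert (by simp)]; ring
  have h2 : ∑ i' ∈ insert i (Finset.Iio i), L i' ≤ ∑ i', L i' :=
    Finset.sum_le_sum_of_subset (Finset.subset_univ _)
  unfold blockOff
  omega

/-- The flattened index of position `j` inside block `i`, when block `i` has size `L i`. -/
def encC {n : ℕ} (L : Fin n → ℕ) (i : Fin n) (j : Fin (L i)) : Fin (∑ i', L i') :=
  ⟨blockOff L i + j, blockOff_add_lt L i j.isLt⟩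

/-- The (square) confluent Vandermonde matrix on nodes `ξ_i` with multiplicities `L i`:
rows are indexed by `k = 0,…,(∑ L i)−1`; the entry in row `k` and column `j` of block `i`
is `(k)_j ξ_i^{k−j}` (zero when `j > k`). -/
def confVand {n : ℕ} (L : Fin n → ℕ) (ξ : Fin n → ℂ) :
    Matrix (Fin (∑ i, L i)) (Fin (∑ i, L i)) ℂ :=
  fun k c => ∑ i, ∑ j : Fin (L i),
    if c = encC L i j then ((k : ℕ).descFactorial j : ℂ) * ξ i ^ ((k : ℕ) - (j : ℕ)) else 0

/-- The index (in the parameter vector) of the magnitude `a_{i,j}` (`j < l i`) or,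
for `j = l i`, of the node `ξ_i`; the parameters are ordered
`(a_{1,0},…,a_{1,l_1−1}, ξ_1, …, a_{n,0},…,a_{n,l_n−1}, ξ_n)`. -/
def encP {n : ℕ} (l : Fin n → ℕ) (i : Fin n) (j : Fin (l i + 1)) :
    Fin (∑ i', (l i' + 1)) :=
  encC (fun i' => l i' + 1) i j

/-- The parameter vector `x = (a_{1,0},…,a_{1,l_1−1}, ξ_1, …, a_{n,0},…,a_{n,l_n−1}, ξ_n)`. -/
def pronyParam {n : ℕ} (l : Fin n → ℕ) (ξ : Fin n → ℂ)
    (a : (i : Fin n) → Fin (l i) → ℂ) : Fin (∑ i', (l i' + 1)) → ℂ :=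
  fun p => ∑ i, ∑ j : Fin (l i + 1),
    if p = encP l i j then (if h : (j : ℕ) < l i then a i ⟨j, h⟩ else ξ i) else 0

/-- The Prony map `P : ℂ^R → ℂ^R` sending the parameter vector
`x = (a_{1,0},…,a_{1,l_1−1}, ξ_1, …, a_{n,0},…,a_{n,l_n−1}, ξ_n)` to the moment vector
`(m_0,…,m_{R−1})`, `m_k = Σ_i Σ_{j<l_i} a_{i,j} (k)_j ξ_i^{k−j}`. -/
def pronyMap {n : ℕ} (l : Fin n → ℕ) (x : Fin (∑ i', (l i' + 1)) → ℂ) :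
    Fin (∑ i', (l i' + 1)) → ℂ :=
  fun k => ∑ i, ∑ j : Fin (l i),
    x (encP l i (Fin.castSucc j)) * ((k : ℕ).descFactorial j : ℂ) *
      (x (encP l i (Fin.last (l i)))) ^ ((k : ℕ) - (j : ℕ))

/-- The Jacobian matrix of the Prony map at `x`: the `(k,p)` entry is the partial
derivative of the `k`-th moment with respect to the `p`-th parameter. -/
def pronyJacobian {n : ℕ} (l : Fin n → ℕ) (x : Fin (∑ i', (l i' + 1)) → ℂ) :
    Matrix (Fin (∑ i', (l i' + 1))) (Fin (∑ i', (l i' + 1))) ℂ :=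
  fun k p => deriv (fun t : ℂ => pronyMap l (Function.update x p t) k) (x p)


lemma blockOff_le {n : ℕ} (L : Fin n → ℕ) {i i' : Fin n} (h : i < i') :
    blockOff L i + L i ≤ blockOff L i' := by
  have hsub : insert i (Finset.Iio i) ⊆ Finset.Iio i' := by
    intro x hx
    simp only [Finset.mem_insert, Finset.mem_Iio] at hx ⊢
    rcases hx with rfl | hx
    · exact h
    · exact hx.trans h
  calc blockOff L i + L i = ∑ x ∈ insert i (Finset.Iio i), L x := by
        rw [Finset.sum_insert (by simp)]; unfold blockOff; ring
    _ ≤ _ := Finset.sum_le_sum_of_subset hsub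

lemma encC_inj {n : ℕ} (L : Fin n → ℕ) {i i' : Fin n} {j : Fin (L i)} {j' : Fin (L i')}
    (h : encC L i j = encC L i' j') : i = i' ∧ (j : ℕ) = (j' : ℕ) := by
  have hv : blockOff L i + (j : ℕ) = blockOff L i' + (j' : ℕ) := congrArg Fin.val h
  have hii : i = i' := by
    by_contra hne
    have hj := j.isLt
    have hj' := j'.isLt
    rcases lt_or_gt_of_ne hne with hlt | hlt
    · have := blockOff_le L hlt; omega
    · have := blockOff_le L hlt; omega
  subst hii
  exact ⟨rfl, by omega⟩

/-- The sigma-type encoding of flattened indices is a bijection. -/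
def encCEquiv {n : ℕ} (L : Fin n → ℕ) : (Σ i : Fin n, Fin (L i)) ≃ Fin (∑ i, L i) :=
  Equiv.ofBijective (fun x => encC L x.1 x.2)
    ((Fintype.bijective_iff_injective_and_card _).mpr
      ⟨fun x y hxy => by
        obtain ⟨h1, h2⟩ := encC_inj L hxy
        obtain ⟨i, j⟩ := x; obtain ⟨i', j'⟩ := y
        cases h1
        exact congrArg (Sigma.mk i) (Fin.ext h2),
       by simp [Fintype.card_sigma]⟩)

@[simp] lemma encCEquiv_symm_apply {n : ℕ} (L : Fin n → ℕ) (i : Fin n) (j : Fin (L i)) :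
    (encCEquiv L).symm (encC L i j) = ⟨i, j⟩ :=
  (encCEquiv L).symm_apply_apply ⟨i, j⟩

lemma confVand_apply {n : ℕ} (L : Fin n → ℕ) (ξ : Fin n → ℂ) (k : Fin (∑ i, L i))
    (i : Fin n) (j : Fin (L i)) :
    confVand L ξ k (encC L i j) = ((k : ℕ).descFactorial j : ℂ) * ξ i ^ ((k : ℕ) - (j : ℕ)) := by
  unfold confVand
  rw [Finset.sum_eq_single i]
  · rw [Finset.sum_eq_single j]
    · simp
    · intro b _ hb
      rw [if_neg]
      intro hh
      exact hb (Fin.ext (encC_inj L hh).2.symm)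
    · simp
  · intro b _ hb
    apply Finset.sum_eq_zero
    intro j' _
    rw [if_neg]
    intro hh
    exact hb (encC_inj L hh).1.symm
  · simp

lemma pronyParam_apply {n : ℕ} (l : Fin n → ℕ) (ξ : Fin n → ℂ)
    (a : (i : Fin n) → Fin (l i) → ℂ) (i : Fin n) (j : Fin (l i + 1)) :
    pronyParam l ξ a (encP l i j) = if h : (j : ℕ) < l i then a i ⟨j, h⟩ else ξ i := by
  unfold pronyParam
  rw [Finset.sum_eq_single i]
  · rw [Finset.sum_eq_single j]
    · simp
    · intro b _ hb
      rw [if_neg]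
      intro hh
      exact hb (Fin.ext (encC_inj _ hh).2.symm)
    · simp
  · intro b _ hb
    apply Finset.sum_eq_zero
    intro j' _
    rw [if_neg]
    intro hh
    exact hb (encC_inj _ hh).1.symm
  · simp

lemma update_differentiable {N : ℕ} (x : Fin N → ℂ) (p idx : Fin N) :
    Differentiable ℂ (fun t : ℂ => Function.update x p t idx) := by
  rcases eq_or_ne idx p with rfl | h
  · simp only [Function.update_self]
    exact differentiable_id
  · simp only [Function.update_of_ne h]
    exact differentiable_const _

lemma pronyJacobian_magnitude {n : ℕ} (l : Fin n → ℕ) (ξ : Fin n → ℂ)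
    (a : (i : Fin n) → Fin (l i) → ℂ) (k : Fin (∑ i', (l i' + 1))) (i : Fin n) (j : Fin (l i)) :
    pronyJacobian l (pronyParam l ξ a) k (encP l i (Fin.castSucc j)) =
      ((k : ℕ).descFactorial j : ℂ) * ξ i ^ ((k : ℕ) - (j : ℕ)) := by
  set x := pronyParam l ξ a with hx
  set p := encP l i (Fin.castSucc j) with hp
  have hdiff := update_differentiable x p
  have hterm : ∀ (i' : Fin n) (j' : Fin (l i')), Differentiable ℂ
      (fun t : ℂ => Function.update x p t (encP l i' (Fin.castSucc j')) *
        ((k : ℕ).descFactorial j' : ℂ) *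
        (Function.update x p t (encP l i' (Fin.last (l i')))) ^ ((k : ℕ) - (j' : ℕ))) :=
    fun i' j' => ((hdiff _).mul_const _).mul ((hdiff _).pow _)
  unfold pronyJacobian pronyMap
  rw [deriv_fun_sum (fun i' _ => ((Differentiable.fun_sum (fun j' _ => hterm i' j')).differentiableAt))]
  rw [Finset.sum_eq_single i]
  · rw [deriv_fun_sum (fun j' _ => (hterm i j').differentiableAt)]
    rw [Finset.sum_eq_single j]
    · have h2 : encP l i (Fin.last (l i)) ≠ p := by
        rw [hp]; intro hh
        have := (encC_inj _ hh).2
        simp only [Fin.val_last, Fin.coe_castSucc] at this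
        omega
      simp only [← hp, Function.update_self, Function.update_of_ne h2]
      have hxv : x (encP l i (Fin.last (l i))) = ξ i := by
        rw [hx, pronyParam_apply, dif_neg]; simp
      rw [hxv]
      simp [deriv_mul_const_field]
    · intro j' _ hj'
      have h1 : encP l i (Fin.castSucc j') ≠ p := by
        rw [hp]; intro hh
        have := (encC_inj _ hh).2
        simp only [Fin.coe_castSucc] at this
        exact hj' (Fin.ext this)
      have h2 : encP l i (Fin.last (l i)) ≠ p := by
        rw [hp]; intro hh
        have := (encC_inj _ hh).2
        simp only [Fin.val_last, Fin.coe_castSucc] at this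
        omega
      simp only [Function.update_of_ne h1, Function.update_of_ne h2]
      exact deriv_const _ _
    · simp
  · intro i' _ hi'
    rw [deriv_fun_sum (fun j' _ => (hterm i' j').differentiableAt)]
    apply Finset.sum_eq_zero
    intro j' _
    have h1 : encP l i' (Fin.castSucc j') ≠ p := by
      rw [hp]; intro hh; exact hi' (encC_inj _ hh).1
    have h2 : encP l i' (Fin.last (l i')) ≠ p := by
      rw [hp]; intro hh; exact hi' (encC_inj _ hh).1
    simp only [Function.update_of_ne h1, Function.update_of_ne h2]
    exact deriv_const _ _
  · simp

lemma pronyJacobian_node {n : ℕ} (l : Fin n → ℕ) (ξ : Fin n → ℂ)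
    (a : (i : Fin n) → Fin (l i) → ℂ) (k : Fin (∑ i', (l i' + 1))) (i : Fin n) :
    pronyJacobian l (pronyParam l ξ a) k (encP l i (Fin.last (l i))) =
      ∑ j' : Fin (l i), a i j' * ((k : ℕ).descFactorial j' : ℂ) *
        ((((k : ℕ) - (j' : ℕ) : ℕ) : ℂ) * ξ i ^ ((k : ℕ) - (j' : ℕ) - 1)) := by
  set x := pronyParam l ξ a with hx
  set p := encP l i (Fin.last (l i)) with hp
  have hdiff := update_differentiable x p
  have hterm : ∀ (i' : Fin n) (j' : Fin (l i')), Differentiable ℂ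
      (fun t : ℂ => Function.update x p t (encP l i' (Fin.castSucc j')) *
        ((k : ℕ).descFactorial j' : ℂ) *
        (Function.update x p t (encP l i' (Fin.last (l i')))) ^ ((k : ℕ) - (j' : ℕ))) :=
    fun i' j' => ((hdiff _).mul_const _).mul ((hdiff _).pow _)
  have hcast : ∀ j' : Fin (l i), encP l i (Fin.castSucc j') ≠ p := by
    intro j' hh
    rw [hp] at hh
    have := (encC_inj _ hh).2
    simp only [Fin.val_last, Fin.coe_castSucc] at this
    have := j'.isLt
    omega
  have hxp : x p = ξ i := by
    rw [hx, hp, pronyParam_apply, dif_neg]; simp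
  have hxa : ∀ j' : Fin (l i), x (encP l i (Fin.castSucc j')) = a i j' := by
    intro j'
    rw [hx, pronyParam_apply]
    rw [dif_pos (by simpa using j'.isLt)]
    congr 1
  unfold pronyJacobian pronyMap
  rw [deriv_fun_sum (fun i' _ => ((Differentiable.fun_sum (fun j' _ => hterm i' j')).differentiableAt))]
  rw [Finset.sum_eq_single i]
  · rw [deriv_fun_sum (fun j' _ => (hterm i j').differentiableAt)]
    apply Finset.sum_congr rfl
    intro j' _
    rw [show encP l i (Fin.last (l i)) = p from rfl]
    simp only [Function.update_of_ne (hcast j'), Function.update_self, hxa j']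
    rw [deriv_const_mul_field, deriv_pow_field, hxp]
  · intro i' _ hi'
    rw [deriv_fun_sum (fun j' _ => (hterm i' j').differentiableAt)]
    apply Finset.sum_eq_zero
    intro j' _
    have h1 : encP l i' (Fin.castSucc j') ≠ p := by
      rw [hp]; intro hh; exact hi' (encC_inj _ hh).1
    have h2 : encP l i' (Fin.last (l i')) ≠ p := by
      rw [hp]; intro hh; exact hi' (encC_inj _ hh).1
    simp only [Function.update_of_ne h1, Function.update_of_ne h2]
    exact deriv_const _ _
  · simp

/-- body of the elimination matrix on sigma indices -/
def elimBody {n : ℕ} (l : Fin n → ℕ) (a : (i : Fin n) → Fin (l i) → ℂ)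
    (cm pj : Σ i : Fin n, Fin (l i + 1)) : ℂ :=
  if cm.1 = pj.1 then
    (if (pj.2 : ℕ) = l pj.1 then
      (if hm : 1 ≤ (cm.2 : ℕ) then a cm.1 ⟨(cm.2 : ℕ) - 1, by have := cm.2.isLt; omega⟩ else 0)
     else if (cm.2 : ℕ) = (pj.2 : ℕ) then 1 else 0)
  else 0

lemma elimBody_mk {n : ℕ} (l : Fin n → ℕ) (a : (i : Fin n) → Fin (l i) → ℂ)
    (i i' : Fin n) (m : Fin (l i + 1)) (j : Fin (l i' + 1)) :
    elimBody l a ⟨i, m⟩ ⟨i', j⟩ =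
      if i = i' then
        (if (j : ℕ) = l i' then
          (if hm : 1 ≤ (m : ℕ) then a i ⟨(m : ℕ) - 1, by have := m.isLt; omega⟩ else 0)
         else if (m : ℕ) = (j : ℕ) then 1 else 0)
      else 0 := rfl

/-- The elimination matrix expressing Jacobian columns in terms of confluent Vandermonde
columns. -/
def elimMat {n : ℕ} (l : Fin n → ℕ) (a : (i : Fin n) → Fin (l i) → ℂ) :
    Matrix (Fin (∑ i', (l i' + 1))) (Fin (∑ i', (l i' + 1))) ℂ :=
  fun c p => elimBody l a ((encCEquiv (fun i' => l i' + 1)).symm c)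
    ((encCEquiv (fun i' => l i' + 1)).symm p)

lemma elimMat_apply {n : ℕ} (l : Fin n → ℕ) (a : (i : Fin n) → Fin (l i) → ℂ)
    (i i' : Fin n) (m : Fin (l i + 1)) (j : Fin (l i' + 1)) :
    elimMat l a (encP l i m) (encP l i' j) = elimBody l a ⟨i, m⟩ ⟨i', j⟩ := by
  unfold elimMat
  rw [show encP l i m = encC (fun i' => l i' + 1) i m from rfl,
    show encP l i' j = encC (fun i'' => l i'' + 1) i' j from rfl,
    encCEquiv_symm_apply, encCEquiv_symm_apply]

/-- The elimination matrix is upper triangular. -/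
lemma elimMat_blockTriangular {n : ℕ} (l : Fin n → ℕ) (a : (i : Fin n) → Fin (l i) → ℂ) :
    (elimMat l a).BlockTriangular id := by
  intro c p h
  obtain ⟨⟨i, m⟩, rfl⟩ := (encCEquiv (fun i' => l i' + 1)).surjective c
  obtain ⟨⟨i', j⟩, rfl⟩ := (encCEquiv (fun i' => l i' + 1)).surjective p
  have hc : encCEquiv (fun i' => l i' + 1) ⟨i, m⟩ = encC (fun i' => l i' + 1) i m := rfl
  have hp2 : encCEquiv (fun i' => l i' + 1) ⟨i', j⟩ = encC (fun i' => l i' + 1) i' j := rfl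
  rw [hc, hp2] at h ⊢
  rw [show encC (fun i' => l i' + 1) i m = encP l i m from rfl,
    show encC (fun i'' => l i'' + 1) i' j = encP l i' j from rfl, elimMat_apply,
    elimBody_mk]
  have hval : blockOff (fun i'' => l i'' + 1) i' + (j : ℕ) <
      blockOff (fun i'' => l i'' + 1) i + (m : ℕ) := h
  by_cases hii : i = i'
  · subst hii
    rw [if_pos rfl]
    have hjm : (j : ℕ) < (m : ℕ) := by omega
    have hml := m.isLt
    rw [if_neg (by omega : ¬ (j : ℕ) = l i), if_neg (by omega : ¬ (m : ℕ) = (j : ℕ))]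
  · rw [if_neg hii]

lemma elimMat_det {n : ℕ} (l : Fin n → ℕ) (hl : ∀ i, 1 ≤ l i)
    (a : (i : Fin n) → Fin (l i) → ℂ) :
    (elimMat l a).det = ∏ i, a i ⟨l i - 1, Nat.sub_lt (hl i) Nat.one_pos⟩ := by
  rw [Matrix.det_of_upperTriangular (elimMat_blockTriangular l a)]
  rw [← Fintype.prod_equiv (encCEquiv (fun i' => l i' + 1))
      (fun s => elimMat l a (encCEquiv (fun i' => l i' + 1) s) (encCEquiv (fun i' => l i' + 1) s))
      _ (fun s => rfl)]
  rw [← Finset.univ_sigma_univ, Finset.prod_sigma]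
  apply Finset.prod_congr rfl
  intro i _
  have key : ∀ m : Fin (l i + 1),
      elimMat l a (encCEquiv (fun i' => l i' + 1) ⟨i, m⟩) (encCEquiv (fun i' => l i' + 1) ⟨i, m⟩)
        = if (m : ℕ) = l i then a i ⟨l i - 1, Nat.sub_lt (hl i) Nat.one_pos⟩ else 1 := by
    intro m
    rw [show encCEquiv (fun i' => l i' + 1) ⟨i, m⟩ = encP l i m from rfl, elimMat_apply,
      elimBody_mk]
    rw [if_pos rfl]
    by_cases hm : (m : ℕ) = l i
    · rw [if_pos hm, if_pos hm, dif_pos (by have := hl i; omega)]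
      congr 1
      exact Fin.ext (by simp [hm])
    · rw [if_neg hm, if_neg hm, if_pos rfl]
  rw [Finset.prod_congr rfl (fun m _ => key m)]
  rw [Finset.prod_eq_single (⟨l i, by omega⟩ : Fin (l i + 1))]
  · rw [if_pos rfl]
  · intro m _ hm
    rw [if_neg (fun hh => hm (Fin.ext hh))]
  · simp

lemma jac_factorization {n : ℕ} (l : Fin n → ℕ) (ξ : Fin n → ℂ)
    (a : (i : Fin n) → Fin (l i) → ℂ) :
    pronyJacobian l (pronyParam l ξ a) = confVand (fun i' => l i' + 1) ξ * elimMat l a := by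
  ext k p
  obtain ⟨⟨i, j⟩, rfl⟩ := (encCEquiv (fun i' => l i' + 1)).surjective p
  rw [show encCEquiv (fun i' => l i' + 1) ⟨i, j⟩ = encP l i j from rfl]
  rw [Matrix.mul_apply]
  rw [← Fintype.sum_equiv (encCEquiv (fun i' => l i' + 1))
      (fun s => confVand (fun i' => l i' + 1) ξ k (encCEquiv (fun i' => l i' + 1) s) *
        elimMat l a (encCEquiv (fun i' => l i' + 1) s) (encP l i j))
      _ (fun s => rfl)]
  rw [← Finset.univ_sigma_univ, Finset.sum_sigma]
  rw [Finset.sum_eq_single i]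
  · -- inner sum over m : Fin (l i + 1)
    have hrw : ∀ m : Fin (l i + 1),
        confVand (fun i' => l i' + 1) ξ k (encCEquiv (fun i' => l i' + 1) ⟨i, m⟩) *
          elimMat l a (encCEquiv (fun i' => l i' + 1) ⟨i, m⟩) (encP l i j) =
        (((k : ℕ).descFactorial m : ℂ) * ξ i ^ ((k : ℕ) - (m : ℕ))) *
          elimBody l a ⟨i, m⟩ ⟨i, j⟩ := by
      intro m
      rw [show encCEquiv (fun i' => l i' + 1) ⟨i, m⟩ = encP l i m from rfl, elimMat_apply,
        show encP l i m = encC (fun i' => l i' + 1) i m from rfl, confVand_apply]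
    rw [Finset.sum_congr rfl (fun m _ => hrw m)]
    rcases Nat.lt_or_ge (j : ℕ) (l i) with hj | hj
    · -- magnitude column
      have hjeq : encP l i j = encP l i (Fin.castSucc ⟨(j : ℕ), hj⟩) := by
        congr 1
      rw [hjeq, pronyJacobian_magnitude]
      rw [Finset.sum_eq_single j]
      · rw [elimBody_mk, if_pos rfl, if_neg (by omega : ¬ (j : ℕ) = l i), if_pos rfl]
        simp
      · intro m _ hm
        rw [elimBody_mk, if_pos rfl, if_neg (by omega : ¬ (j : ℕ) = l i),
          if_neg (fun hh => hm (Fin.ext hh)), mul_zero]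
      · simp
    · -- node column
      have hjl : (j : ℕ) = l i := by have := j.isLt; omega
      have hjeq : encP l i j = encP l i (Fin.last (l i)) := by
        congr 1
        exact Fin.ext (by simpa using hjl)
      rw [hjeq, pronyJacobian_node]
      have hbody : ∀ m : Fin (l i + 1), elimBody l a ⟨i, m⟩ ⟨i, j⟩ =
          (if hm : 1 ≤ (m : ℕ) then a i ⟨(m : ℕ) - 1, by have := m.isLt; omega⟩ else 0) := by
        intro m
        rw [elimBody_mk, if_pos rfl, if_pos hjl]
      simp only [hbody]
      rw [Fin.sum_univ_succ]
      rw [dif_neg (by simp : ¬ 1 ≤ ((0 : Fin (l i + 1)) : ℕ)), mul_zero, zero_add]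
      apply Finset.sum_congr rfl
      intro j' _
      simp only [Fin.val_succ, Nat.add_sub_cancel, Fin.eta, Nat.descFactorial_succ,
        ← Nat.sub_sub]
      rw [dif_pos (by omega : 1 ≤ (j' : ℕ) + 1)]
      push_cast
      ring
  · intro i'' _ hi''
    apply Finset.sum_eq_zero
    intro m _
    rw [show encCEquiv (fun i' => l i' + 1) ⟨i'', m⟩ = encP l i'' m from rfl, elimMat_apply,
      elimBody_mk, if_neg hi'', mul_zero]
  · simp

lemma confVand_det_ne_zero {n : ℕ} (L : Fin n → ℕ) (hL : ∀ i, 1 ≤ L i) (ξ : Fin n → ℂ)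
    (hξ : Function.Injective ξ) : (confVand L ξ).det ≠ 0 := by
  intro h0
  obtain ⟨c, hc0, hcM⟩ := Matrix.exists_vecMul_eq_zero_iff.mpr h0
  set p : Polynomial ℂ := ∑ k : Fin (∑ i, L i), Polynomial.C (c k) * Polynomial.X ^ (k : ℕ)
    with hpdef
  have hcoeff : ∀ m : Fin (∑ i, L i), p.coeff m = c m := by
    intro m
    rw [hpdef, Polynomial.finset_sum_coeff]
    rw [Finset.sum_eq_single m]
    · simp
    · intro b _ hb
      rw [Polynomial.coeff_C_mul, Polynomial.coeff_X_pow,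
        if_neg (fun hh => hb (Fin.ext hh.symm)), mul_zero]
    · simp
  have hp0 : p ≠ 0 := by
    intro hp
    apply hc0
    funext m
    have h := hcoeff m
    rw [hp] at h
    simpa using h.symm
  have hdeg : p.degree < ((∑ i, L i : ℕ) : WithBot ℕ) := by
    rw [hpdef]
    apply lt_of_le_of_lt (Polynomial.degree_sum_le _ _)
    rw [Finset.sup_lt_iff (by exact_mod_cast WithBot.bot_lt_coe _)]
    intro k _
    apply lt_of_le_of_lt (Polynomial.degree_C_mul_X_pow_le _ _)
    exact_mod_cast (Nat.cast_lt (α := WithBot ℕ)).mpr k.isLt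
  have hnatdeg : p.natDegree < ∑ i, L i :=
    (Polynomial.natDegree_lt_iff_degree_lt hp0).mpr hdeg
  have hder : ∀ (i : Fin n) (m : ℕ), m < L i →
      (Polynomial.derivative^[m] p).IsRoot (ξ i) := by
    intro i m hm
    have hcol := congrFun hcM (encC L i ⟨m, hm⟩)
    simp only [Matrix.vecMul, dotProduct, Pi.zero_apply] at hcol
    have hcol' : ∑ k : Fin (∑ i, L i),
        c k * (((k : ℕ).descFactorial m : ℂ) * ξ i ^ ((k : ℕ) - m)) = 0 := by
      rw [← hcol]
      apply Finset.sum_congr rfl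
      intro k _
      rw [confVand_apply]
    unfold Polynomial.IsRoot
    rw [hpdef, Polynomial.iterate_derivative_sum]
    rw [Polynomial.eval_finset_sum]
    rw [← hcol']
    apply Finset.sum_congr rfl
    intro k _
    rw [Polynomial.iterate_derivative_C_mul, Polynomial.iterate_derivative_X_pow_eq_natCast_mul]
    simp [mul_assoc]
  have hmult : ∀ i, L i ≤ p.rootMultiplicity (ξ i) := by
    intro i
    have h1 : L i - 1 < p.rootMultiplicity (ξ i) := by
      rw [Polynomial.lt_rootMultiplicity_iff_isRoot_iterate_derivative_of_mem_nonZeroDivisors hp0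
        (mem_nonZeroDivisors_of_ne_zero (by
          exact_mod_cast Nat.cast_ne_zero.mpr (Nat.factorial_ne_zero _)))]
      intro m hm
      exact hder i m (by have := hL i; omega)
    have := hL i
    omega
  have hcount : ∀ i, L i ≤ p.roots.count (ξ i) := by
    intro i
    rw [Polynomial.count_roots]
    exact hmult i
  have hmem : ∀ i, ξ i ∈ p.roots.toFinset := by
    intro i
    rw [Multiset.mem_toFinset, ← Multiset.count_pos]
    have := hcount i
    have := hL i
    omega
  have himg : Finset.univ.image ξ ⊆ p.roots.toFinset := by
    intro x hx
    obtain ⟨i, _, rfl⟩ := Finset.mem_image.mp hx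
    exact hmem i
  have hchain : ∑ i, L i ≤ p.natDegree := by
    calc ∑ i, L i ≤ ∑ i, p.roots.count (ξ i) := Finset.sum_le_sum (fun i _ => hcount i)
      _ = ∑ x ∈ Finset.univ.image ξ, p.roots.count x :=
          by rw [Finset.sum_image (fun i _ j _ h => hξ h)]
      _ ≤ ∑ x ∈ p.roots.toFinset, p.roots.count x :=
          Finset.sum_le_sum_of_subset himg
      _ = p.roots.card := p.roots.toFinset_sum_count_eq
      _ ≤ p.natDegree := p.card_roots'
  omega

/-- `x = ((a_{i,j}),(ξ_i))` is a critical point of the Prony map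
(`det J_P(x) = 0`) iff two nodes collide or some highest magnitude vanishes. -/
theorem pronyMap_critical_point_iff
    (n : ℕ) (hn : 1 ≤ n) (l : Fin n → ℕ) (hl : ∀ i, 1 ≤ l i)
    (ξ : Fin n → ℂ) (a : (i : Fin n) → Fin (l i) → ℂ) :
    (pronyJacobian l (pronyParam l ξ a)).det = 0 ↔
      (∃ i j : Fin n, i ≠ j ∧ ξ i = ξ j) ∨
        ∃ i, a i ⟨l i - 1, by have := hl i; omega⟩ = 0 := by
  rw [jac_factorization, Matrix.det_mul, elimMat_det l hl a, mul_eq_zero]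
  constructor
  · rintro (hV | hprod)
    · left
      by_contra hcol
      push_neg at hcol
      have hinj : Function.Injective ξ := by
        intro i j hij
        by_contra hne
        exact (hcol i j hne) hij
      exact confVand_det_ne_zero (fun i' => l i' + 1) (fun i' => Nat.le_add_left 1 (l i')) ξ hinj hV
    · right
      obtain ⟨i, _, hi⟩ := Finset.prod_eq_zero_iff.mp hprod
      exact ⟨i, hi⟩
  · rintro (⟨i, j, hne, heq⟩ | ⟨i, ha⟩)
    · left
      apply Matrix.det_zero_of_column_eq
        (i := encC (fun i' => l i' + 1) i 0) (j := encC (fun i' => l i' + 1) j 0)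
      · intro hh
        exact hne (encC_inj _ hh).1
      · intro k
        rw [confVand_apply, confVand_apply, heq]
        simp
    · right
      exact Finset.prod_eq_zero (Finset.mem_univ i) ha
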